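/- Let $f \in C(S^n, \mathbb{R})$ be such that for every closed half space $H = \{x : x\cdot u \ge 0\}$ (with $u$ a unit vector) and every $x, y \in S^n \cap H$, one has $(f(x) - f(Rx))(f(y) - f(Ry)) \ge 0$, where $R$ is the reflection with respect to $\partial H$. Then $f$ is radial symmetric and decreasing with respect to some point of $S^n$. -/

import Mathlib

open Metric Set
open MeasureTheory Function
open scoped RealInnerProductSpace
open Submodule

noncomputable section
variable {n : ℕ}

private lemma refl_apply' (u : EuclideanSpace ℝ (Fin (n+1))) (hu : ‖u‖ = 1)
    (y : EuclideanSpace ℝ (Fin (n+1))) :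
    reflection (ℝ ∙ u)ᗮ y = y - (2 * ⟪y, u⟫) • u := by
  rw [reflection_orthogonal_apply, reflection_singleton_apply, hu, real_inner_comm u y]
  simp [two_smul]
  module

private lemma inner_refl (u : EuclideanSpace ℝ (Fin (n+1))) (hu : ‖u‖ = 1)
    (y : EuclideanSpace ℝ (Fin (n+1))) :
    ⟪u, reflection (ℝ ∙ u)ᗮ y⟫ = -⟪u, y⟫ := by
  rw [refl_apply' u hu]
  have h1 : ⟪u, u⟫ = 1 := by
    rw [real_inner_self_eq_norm_sq, hu]; norm_num
  rw [inner_sub_right, real_inner_smul_right, h1, real_inner_comm u y]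
  ring

private def Ann (n : ℕ) : Set (EuclideanSpace ℝ (Fin (n+1))) :=
  closedBall 0 1 \ ball 0 2⁻¹

private lemma mem_Ann_iff {y : EuclideanSpace ℝ (Fin (n+1))} :
    y ∈ Ann n ↔ 2⁻¹ ≤ ‖y‖ ∧ ‖y‖ ≤ 1 := by
  simp [Ann, mem_closedBall_zero_iff, mem_ball_zero_iff, not_lt, and_comm]

private lemma Ann_meas : MeasurableSet (Ann n) :=
  measurableSet_closedBall.diff measurableSet_ball

private lemma Ann_compact : IsCompact (Ann n) :=
  (isCompact_closedBall _ _).diff isOpen_ball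

private lemma Ann_ne_zero {y : EuclideanSpace ℝ (Fin (n+1))} (hy : y ∈ Ann n) : y ≠ 0 := by
  rw [mem_Ann_iff] at hy
  intro h; rw [h, norm_zero] at hy; norm_num at hy

set_option synthInstance.maxHeartbeats 200000 in
private lemma refl_preimage_Ann (u : EuclideanSpace ℝ (Fin (n+1))) :
    ((reflection (ℝ ∙ u)ᗮ : EuclideanSpace ℝ (Fin (n+1)) ≃ₗᵢ[ℝ] EuclideanSpace ℝ (Fin (n+1)))) ⁻¹' (Ann n) = Ann n := by
  ext y
  simp [mem_Ann_iff, LinearIsometryEquiv.norm_map]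

private lemma nm_mem_sphere {y : EuclideanSpace ℝ (Fin (n+1))} (hy : y ≠ 0) :
    ‖y‖⁻¹ • y ∈ sphere (0 : EuclideanSpace ℝ (Fin (n+1))) 1 := by
  have : ‖y‖ ≠ 0 := norm_ne_zero_iff.mpr hy
  simp [mem_sphere_iff_norm, norm_smul, abs_of_nonneg (inv_nonneg.mpr (norm_nonneg y)),
    inv_mul_cancel₀ this]

private lemma contOn_nm :
    ContinuousOn (fun y : EuclideanSpace ℝ (Fin (n+1)) => ‖y‖⁻¹ • y)
      {y : EuclideanSpace ℝ (Fin (n+1)) | y ≠ 0} := by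
  exact ContinuousOn.smul ((continuous_norm.continuousOn).inv₀ (fun y hy => norm_ne_zero_iff.mpr hy)) continuousOn_id

private lemma inner_cvec_neg (f : EuclideanSpace ℝ (Fin (n+1)) → ℝ)
    (hf : ContinuousOn f (sphere (0 : EuclideanSpace ℝ (Fin (n+1))) 1))
    (u : EuclideanSpace ℝ (Fin (n+1))) (hu : ‖u‖ = 1)
    (hle : ∀ x ∈ sphere (0 : EuclideanSpace ℝ (Fin (n+1))) 1,
      0 ≤ ⟪x, u⟫ → f x ≤ f (reflection (ℝ ∙ u)ᗮ x))
    (x0 : EuclideanSpace ℝ (Fin (n+1))) (hx0 : x0 ∈ sphere (0 : EuclideanSpace ℝ (Fin (n+1))) 1)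
    (hx0u : 0 ≤ ⟪x0, u⟫) (hlt : f x0 < f (reflection (ℝ ∙ u)ᗮ x0)) :
    ⟪u, ∫ y in Ann n, f (‖y‖⁻¹ • y) • y⟫ < 0 := by
  set e := reflection (ℝ ∙ u)ᗮ with he
  set N : EuclideanSpace ℝ (Fin (n+1)) → EuclideanSpace ℝ (Fin (n+1)) :=
    fun y => ‖y‖⁻¹ • y with hN
  set g : EuclideanSpace ℝ (Fin (n+1)) → ℝ :=
    fun y => (f (N y) - f (N (e y))) * ⟪u, y⟫ with hg
  have hsub : Ann n ⊆ {y : EuclideanSpace ℝ (Fin (n+1)) | y ≠ 0} :=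
    fun y hy => Ann_ne_zero hy
  have he0 : ∀ y : EuclideanSpace ℝ (Fin (n+1)), y ≠ 0 → e y ≠ 0 := by
    intro y hy h
    apply hy
    have h' : ‖e y‖ = 0 := by rw [h, norm_zero]
    rwa [e.norm_map, norm_eq_zero] at h'
  have hFc : ContinuousOn (fun y => f (N y)) {y : EuclideanSpace ℝ (Fin (n+1)) | y ≠ 0} :=
    hf.comp contOn_nm (fun y hy => nm_mem_sphere hy)
  have hFce : ContinuousOn (fun y => f (N (e y))) {y : EuclideanSpace ℝ (Fin (n+1)) | y ≠ 0} :=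
    hFc.comp e.continuous.continuousOn (fun y hy => he0 y hy)
  have hinner_cont : Continuous (fun y : EuclideanSpace ℝ (Fin (n+1)) => ⟪u, y⟫) :=
    Continuous.inner continuous_const continuous_id
  have hgC : ContinuousOn g {y : EuclideanSpace ℝ (Fin (n+1)) | y ≠ 0} :=
    (hFc.sub hFce).mul hinner_cont.continuousOn
  -- integrability
  have hInt1 : IntegrableOn (fun y => f (N y) • y) (Ann n) volume :=
    (ContinuousOn.smul (hFc.mono hsub) continuousOn_id).integrableOn_compact Ann_compact
  have hIntφ : IntegrableOn (fun y => f (N y) * ⟪u, y⟫) (Ann n) volume :=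
    ((hFc.mono hsub).mul hinner_cont.continuousOn).integrableOn_compact Ann_compact
  have hIntφe : IntegrableOn (fun y => f (N (e y)) * ⟪u, y⟫) (Ann n) volume :=
    ((hFce.mono hsub).mul hinner_cont.continuousOn).integrableOn_compact Ann_compact
  have hIntg : IntegrableOn g (Ann n) volume := (hgC.mono hsub).integrableOn_compact Ann_compact
  -- step 1
  have h1 : ⟪u, ∫ y in Ann n, f (N y) • y⟫ = ∫ y in Ann n, f (N y) * ⟪u, y⟫ := by
    rw [← integral_inner hInt1 u]
    congr 1; funext y; rw [real_inner_smul_right]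
  -- step 2 : change of variables
  have hmp : MeasurePreserving e volume volume := e.measurePreserving
  have hmp' : MeasurePreserving e (volume.restrict (Ann n)) (volume.restrict (Ann n)) := by
    have := hmp.restrict_preimage (Ann_meas (n := n))
    rwa [refl_preimage_Ann] at this
  have h2 : ∫ y in Ann n, f (N y) * ⟪u, y⟫ = ∫ y in Ann n, f (N (e y)) * ⟪u, e y⟫ :=
    (hmp'.integral_comp e.toHomeomorph.measurableEmbedding
      (fun y => f (N y) * ⟪u, y⟫)).symm
  have h3 : ∫ y in Ann n, f (N (e y)) * ⟪u, e y⟫ = -∫ y in Ann n, f (N (e y)) * ⟪u, y⟫ := by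
    rw [← integral_neg]
    congr 1; funext y; rw [inner_refl u hu]; ring
  have h4 : ∫ y in Ann n, g y =
      2 * ⟪u, ∫ y in Ann n, f (N y) • y⟫ := by
    have : ∫ y in Ann n, g y =
        (∫ y in Ann n, f (N y) * ⟪u, y⟫) - ∫ y in Ann n, f (N (e y)) * ⟪u, y⟫ := by
      rw [← integral_sub hIntφ hIntφe]
      congr 1; funext y; simp [hg]; ring
    rw [this, h1]
    have hEq : ∫ y in Ann n, f (N (e y)) * ⟪u, y⟫ = -∫ y in Ann n, f (N y) * ⟪u, y⟫ := by
      have := h2.trans h3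
      linarith
    rw [hEq]; ring
  -- auxiliary facts about N and e
  have hNe : ∀ y : EuclideanSpace ℝ (Fin (n+1)), N (e y) = e (N y) := by
    intro y
    show ‖e y‖⁻¹ • (e y) = e (‖y‖⁻¹ • y)
    rw [e.norm_map]
    exact (map_smul e.toLinearEquiv _ _).symm
  have hinner_scale : ∀ y : EuclideanSpace ℝ (Fin (n+1)), y ≠ 0 → ⟪u, y⟫ = ‖y‖ * ⟪u, N y⟫ := by
    intro y hy
    have hn : (‖y‖ : ℝ) ≠ 0 := norm_ne_zero_iff.mpr hy
    show ⟪u, y⟫ = ‖y‖ * ⟪u, ‖y‖⁻¹ • y⟫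
    rw [real_inner_smul_right]
    field_simp
  have hrefl2 : ∀ x : EuclideanSpace ℝ (Fin (n+1)), e (e x) = x := fun x =>
    reflection_reflection _ x
  have hinner_e : ∀ y : EuclideanSpace ℝ (Fin (n+1)), ⟪u, e y⟫ = -⟪u, y⟫ :=
    fun y => inner_refl u hu y
  have he_sphere : ∀ x ∈ sphere (0 : EuclideanSpace ℝ (Fin (n+1))) 1,
      e x ∈ sphere (0 : EuclideanSpace ℝ (Fin (n+1))) 1 := by
    intro x hx
    rw [mem_sphere_iff_norm] at hx ⊢
    rw [sub_zero] at hx ⊢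
    rw [e.norm_map]; exact hx
  -- pointwise sign
  have hg_nonpos : ∀ y ∈ Ann n, g y ≤ 0 := by
    intro y hy
    have hy0 : y ≠ 0 := Ann_ne_zero hy
    have hx : N y ∈ sphere (0 : EuclideanSpace ℝ (Fin (n+1))) 1 := nm_mem_sphere hy0
    have hiy : ⟪u, y⟫ = ‖y‖ * ⟪u, N y⟫ := hinner_scale y hy0
    have hgy : g y = (f (N y) - f (e (N y))) * ⟪u, y⟫ := by rw [hg]; simp only [hNe]
    rcases le_or_gt 0 ⟪N y, u⟫ with hpos | hneg
    · have h₁ : f (N y) ≤ f (e (N y)) := hle (N y) hx hpos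
      have h₂ : 0 ≤ ⟪u, y⟫ := by
        rw [hiy, real_inner_comm (N y) u]
        exact mul_nonneg (norm_nonneg y) hpos
      rw [hgy]; nlinarith
    · have hx' : e (N y) ∈ sphere (0 : EuclideanSpace ℝ (Fin (n+1))) 1 := he_sphere _ hx
      have hxu' : 0 ≤ ⟪e (N y), u⟫ := by
        have hc := real_inner_comm (N y) u
        rw [← real_inner_comm (e (N y)) u, hinner_e]
        linarith
      have h₁ : f (e (N y)) ≤ f (N y) := by
        have := hle (e (N y)) hx' hxu'
        rwa [hrefl2] at this
      have h₂ : ⟪u, y⟫ ≤ 0 := by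
        rw [hiy, real_inner_comm (N y) u]
        exact mul_nonpos_of_nonneg_of_nonpos (norm_nonneg y) (le_of_lt hneg)
      rw [hgy]; nlinarith
  -- strict at a point
  have hx0u' : 0 < ⟪x0, u⟫ := by
    rcases lt_or_eq_of_le hx0u with h' | h'
    · exact h'
    · exfalso
      have : e x0 = x0 := by
        rw [he, refl_apply' u hu, ← h']
        simp
      rw [this] at hlt; exact lt_irrefl _ hlt
  set y0 : EuclideanSpace ℝ (Fin (n+1)) := (3/4 : ℝ) • x0 with hy0def
  have hx0n : ‖x0‖ = 1 := by rwa [mem_sphere_iff_norm, sub_zero] at hx0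
  have hy0n : ‖y0‖ = 3/4 := by
    rw [hy0def, norm_smul, hx0n]; norm_num
  have hNy0 : N y0 = x0 := by
    show ‖y0‖⁻¹ • y0 = x0
    rw [hy0n, hy0def, smul_smul]; norm_num
  have hgy0 : g y0 < 0 := by
    have h1' : g y0 = (f x0 - f (e x0)) * ⟪u, y0⟫ := by
      rw [hg]; simp only [hNe, hNy0]
    have h2' : ⟪u, y0⟫ = (3/4 : ℝ) * ⟪u, x0⟫ := by
      rw [hy0def, real_inner_smul_right]
    have h3' : 0 < ⟪u, y0⟫ := by
      rw [h2', real_inner_comm x0 u]; nlinarith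
    rw [h1']
    exact mul_neg_of_neg_of_pos (by linarith) h3'
  -- open neighbourhood where g < 0
  have hW : IsOpen ({y : EuclideanSpace ℝ (Fin (n+1)) | y ≠ 0} ∩ g ⁻¹' (Iio 0)) :=
    hgC.isOpen_inter_preimage isOpen_ne isOpen_Iio
  have hy0W : y0 ∈ {y : EuclideanSpace ℝ (Fin (n+1)) | y ≠ 0} ∩ g ⁻¹' (Iio 0) := by
    constructor
    · show y0 ≠ 0
      intro h
      rw [h, norm_zero] at hy0n; norm_num at hy0n
    · exact hgy0
  obtain ⟨ε1, hε1, hball⟩ := Metric.isOpen_iff.mp hW y0 hy0W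
  set ε := min ε1 8⁻¹ with hεdef
  have hε : 0 < ε := lt_min hε1 (by norm_num)
  have hsubsup : ball y0 ε ⊆ support (fun y => -(g y)) ∩ Ann n := by
    intro z hz
    have hz1 : z ∈ ball y0 ε1 := ball_subset_ball (min_le_left _ _) hz
    have hzW := hball hz1
    have hgz : g z < 0 := hzW.2
    have hdist : ‖z - y0‖ < 8⁻¹ := by
      have := mem_ball_iff_norm.mp hz
      calc ‖z - y0‖ < ε := this
        _ ≤ 8⁻¹ := min_le_right _ _
    have habs := abs_norm_sub_norm_le z y0
    have habs' := abs_le.mp (le_trans habs (le_of_lt hdist))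
    constructor
    · show -(g z) ≠ 0
      intro h
      have : g z = 0 := by linarith [neg_eq_zero.mp h]
      linarith
    · rw [mem_Ann_iff]
      constructor
      · rw [hy0n] at habs'; norm_num at habs' ⊢; linarith [habs'.1]
      · rw [hy0n] at habs'; linarith [habs'.2]
  have hμpos : 0 < volume (support (fun y => -(g y)) ∩ Ann n) := by
    calc (0 : ENNReal) < volume (ball y0 ε) := measure_ball_pos volume y0 hε
      _ ≤ _ := measure_mono hsubsup
  have hae : 0 ≤ᵐ[volume.restrict (Ann n)] (fun y => -(g y)) :=
    (ae_restrict_iff' Ann_meas).2 (ae_of_all _ (fun y hy => neg_nonneg.2 (hg_nonpos y hy)))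
  have hintpos : 0 < ∫ y in Ann n, -(g y) :=
    (setIntegral_pos_iff_support_of_nonneg_ae hae hIntg.neg).2 hμpos
  rw [integral_neg] at hintpos
  have : ∫ y in Ann n, g y < 0 := by linarith
  rw [h4] at this
  linarith


/-- If `f ∈ C(Sⁿ)` satisfies, for every half space `H = {x : x·u ≥ 0}` and all
`x, y ∈ Sⁿ ∩ H`, `(f(x) - f(Rx))(f(y) - f(Ry)) ≥ 0` where `R` is the reflection in `∂H`,
then `f` is radial symmetric and decreasing with respect to some point of `Sⁿ`. -/
theorem stmt_6 (n : ℕ) (f : EuclideanSpace ℝ (Fin (n + 1)) → ℝ)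
    (hf : ContinuousOn f (sphere (0 : EuclideanSpace ℝ (Fin (n + 1))) 1))
    (h : ∀ u : EuclideanSpace ℝ (Fin (n + 1)), ‖u‖ = 1 →
      ∀ x ∈ sphere (0 : EuclideanSpace ℝ (Fin (n + 1))) 1,
      ∀ y ∈ sphere (0 : EuclideanSpace ℝ (Fin (n + 1))) 1,
        0 ≤ ⟪x, u⟫ → 0 ≤ ⟪y, u⟫ →
        0 ≤ (f x - f (x - (2 * ⟪x, u⟫) • u)) * (f y - f (y - (2 * ⟪y, u⟫) • u))) :
    ∃ p ∈ sphere (0 : EuclideanSpace ℝ (Fin (n + 1))) 1,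
      ∃ φ : ℝ → ℝ, MonotoneOn φ (Icc (-1 : ℝ) 1) ∧
        ∀ x ∈ sphere (0 : EuclideanSpace ℝ (Fin (n + 1))) 1, f x = φ ⟪x, p⟫ := by
  classical
  set c : EuclideanSpace ℝ (Fin (n+1)) := ∫ y in Ann n, f (‖y‖⁻¹ • y) • y with hc
  have hS : ∀ u : EuclideanSpace ℝ (Fin (n+1)), ‖u‖ = 1 → 0 ≤ ⟪u, c⟫ →
      ∀ x ∈ sphere (0 : EuclideanSpace ℝ (Fin (n+1))) 1, 0 ≤ ⟪x, u⟫ →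
      f (reflection (ℝ ∙ u)ᗮ x) ≤ f x := by
    intro u hu hcu x hx hxu
    by_contra hcon
    push_neg at hcon
    have hle : ∀ y ∈ sphere (0 : EuclideanSpace ℝ (Fin (n+1))) 1, 0 ≤ ⟪y, u⟫ →
        f y ≤ f (reflection (ℝ ∙ u)ᗮ y) := by
      intro y hy hyu
      have hprod := h u hu x hx y hy hxu hyu
      rw [← refl_apply' u hu x, ← refl_apply' u hu y] at hprod
      nlinarith [hprod, hcon]
    have hneg := inner_cvec_neg f hf u hu hle x hx hxu hcon
    rw [← hc] at hneg
    linarith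
  have hmonoc : ∀ x ∈ sphere (0 : EuclideanSpace ℝ (Fin (n+1))) 1,
      ∀ y ∈ sphere (0 : EuclideanSpace ℝ (Fin (n+1))) 1, ⟪y, c⟫ ≤ ⟪x, c⟫ → f y ≤ f x := by
    intro x hx y hy hyx
    rcases eq_or_ne x y with rfl | hne
    · exact le_refl _
    have hxy0 : (0:ℝ) < ‖x - y‖ := by
      rw [norm_pos_iff]; exact sub_ne_zero.mpr hne
    set u : EuclideanSpace ℝ (Fin (n+1)) := ‖x - y‖⁻¹ • (x - y) with hudef
    have hu : ‖u‖ = 1 := by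
      rw [hudef, norm_smul, norm_inv, norm_norm]
      field_simp
    have hxn : ‖x‖ = 1 := by rwa [mem_sphere_iff_norm, sub_zero] at hx
    have hyn : ‖y‖ = 1 := by rwa [mem_sphere_iff_norm, sub_zero] at hy
    have hxx : ⟪x, x⟫ = 1 := by
      rw [real_inner_self_eq_norm_mul_norm, hxn]; norm_num
    have hinxy : ⟪x, y⟫ ≤ 1 := by
      have := real_inner_le_norm x y
      rw [hxn, hyn] at this; linarith
    have hinv0 : (0:ℝ) ≤ ‖x - y‖⁻¹ := inv_nonneg.mpr (norm_nonneg _)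
    have hucc : 0 ≤ ⟪u, c⟫ := by
      rw [hudef, real_inner_smul_left, inner_sub_left]
      nlinarith
    have hxu : 0 ≤ ⟪x, u⟫ := by
      rw [hudef, real_inner_smul_right, inner_sub_right, hxx]
      nlinarith
    have hnormsq : ‖x - y‖ ^ 2 = 2 - 2 * ⟪x, y⟫ := by
      rw [norm_sub_sq_real, hxn, hyn]; ring
    have hreflxy : reflection (ℝ ∙ u)ᗮ x = y := by
      rw [refl_apply' u hu, hudef, real_inner_smul_right, inner_sub_right, hxx, smul_smul]
      have hkey : 2 * (‖x - y‖⁻¹ * (1 - ⟪x, y⟫)) * ‖x - y‖⁻¹ = 1 := by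
        have hne0 : ‖x - y‖ ≠ 0 := ne_of_gt hxy0
        have h2' : (1 - ⟪x, y⟫) = ‖x - y‖ * ‖x - y‖ / 2 := by nlinarith [hnormsq]
        rw [h2']
        field_simp
      rw [hkey, one_smul]
      abel
    have := hS u hu hucc x hx hxu
    rwa [hreflxy] at this
  obtain ⟨p, hp, hpmono⟩ : ∃ p ∈ sphere (0 : EuclideanSpace ℝ (Fin (n+1))) 1,
      ∀ x ∈ sphere (0 : EuclideanSpace ℝ (Fin (n+1))) 1,
      ∀ y ∈ sphere (0 : EuclideanSpace ℝ (Fin (n+1))) 1, ⟪y, p⟫ ≤ ⟪x, p⟫ → f y ≤ f x := by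
    by_cases hc0 : c = 0
    · refine ⟨EuclideanSpace.single 0 1, ?_, ?_⟩
      · rw [mem_sphere_iff_norm, sub_zero, EuclideanSpace.norm_single]; norm_num
      · intro x hx y hy _
        exact hmonoc x hx y hy (by rw [hc0]; simp)
    · have hcn : (0:ℝ) < ‖c‖ := norm_pos_iff.mpr hc0
      refine ⟨‖c‖⁻¹ • c, ?_, ?_⟩
      · rw [mem_sphere_iff_norm, sub_zero, norm_smul, norm_inv, norm_norm]
        field_simp
      · intro x hx y hy hyx
        apply hmonoc x hx y hy
        rw [real_inner_smul_right, real_inner_smul_right] at hyx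
        exact (mul_le_mul_iff_right₀ (inv_pos.mpr hcn)).mp hyx
  have hpn : ‖p‖ = 1 := by rwa [mem_sphere_iff_norm, sub_zero] at hp
  have hpp : ⟪p, p⟫ = 1 := by
    rw [real_inner_self_eq_norm_mul_norm, hpn]; norm_num
  have hip_le : ∀ x ∈ sphere (0 : EuclideanSpace ℝ (Fin (n+1))) 1, ⟪x, p⟫ ≤ 1 := by
    intro x hx
    have := real_inner_le_norm x p
    rw [hpn] at this
    rw [mem_sphere_iff_norm, sub_zero] at hx
    rw [hx] at this; linarith
  have hip_ge : ∀ x ∈ sphere (0 : EuclideanSpace ℝ (Fin (n+1))) 1, -1 ≤ ⟪x, p⟫ := by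
    intro x hx
    have := real_inner_le_norm (-x) p
    rw [hpn, norm_neg] at this
    rw [mem_sphere_iff_norm, sub_zero] at hx
    rw [hx, inner_neg_left] at this; linarith
  set T : ℝ → Set ℝ := fun t =>
    f '' {x | x ∈ sphere (0 : EuclideanSpace ℝ (Fin (n+1))) 1 ∧ ⟪x, p⟫ ≤ t} with hT
  have hbdd : ∀ t, BddAbove (T t) := by
    intro t
    refine ⟨f p, ?_⟩
    rintro r ⟨x, ⟨hx, _⟩, rfl⟩
    exact hpmono p hp x hx (by rw [hpp]; exact hip_le x hx)
  have hnonempty : ∀ t, -1 ≤ t → (T t).Nonempty := by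
    intro t ht
    refine ⟨f (-p), -p, ⟨?_, ?_⟩, rfl⟩
    · rw [mem_sphere_iff_norm, sub_zero, norm_neg, hpn]
    · rw [inner_neg_left, hpp]; linarith
  refine ⟨p, hp, fun t => sSup (T t), ?_, ?_⟩
  · intro s hs t ht hst
    apply csSup_le_csSup (hbdd t) (hnonempty s hs.1)
    apply image_mono
    intro x hx
    exact ⟨hx.1, hx.2.trans hst⟩
  · intro x hx
    apply le_antisymm
    · exact le_csSup (hbdd _) ⟨x, ⟨hx, le_rfl⟩, rfl⟩
    · apply csSup_le (hnonempty _ (hip_ge x hx))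
      rintro r ⟨y, ⟨hy, hyt⟩, rfl⟩
      exact hpmono x hx y hy hyt
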